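/- Let R be a commutative ring, A a finite abelian group, and f : A × A → R a commutative 2-cocycle of A with values in the multiplicative monoid of R. Let B be a commutative R-algebra which is free as an R-module with basis (v_λ)_{λ ∈ A} such that v_0 = 1 and v_λ · v_{λ'} = f(λ, λ') · v_{λ+λ'} for all λ, λ' ∈ A. Then the element d := |A|^{|A|} · ∏_{λ ∈ A} f(λ, −λ) of R annihilates the module of Kähler differentials Ω_{B/R}: for every ω ∈ Ω_{B/R}, the image of d in B acts as zero on ω. -/

import Mathlib

/-- Let `f : A × A → R` be a commutative 2-cocycle of a finite abelian group `A` with values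
in the multiplicative monoid of `R`, and let `B` be the associated free `R`-algebra with basis
`(v λ)` and multiplication `v λ * v λ' = f (λ, λ') • v (λ + λ')`.  Then the discriminant
`d = |A| ^ |A| * ∏_λ f (λ, -λ)` annihilates the module of Kähler differentials `Ω_{B/R}`. -/
theorem stacky_covers_discriminant_annihilates_differentials (R B A : Type*) [CommRing R]
    [CommRing B] [Algebra R B] [AddCommGroup A] [Fintype A] (f : A × A → R)
    (hf0 : ∀ lam : A, f (0, lam) = 1)
    (hfc : ∀ lam lam' : A, f (lam, lam') = f (lam', lam))
    (hfa : ∀ lam lam' lam'' : A,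
      f (lam, lam') * f (lam + lam', lam'') = f (lam', lam'') * f (lam' + lam'', lam))
    (v : Module.Basis A R B) (hv0 : v 0 = 1)
    (hmul : ∀ lam lam' : A, v lam * v lam' = f (lam, lam') • v (lam + lam')) :
    ∀ ω : KaehlerDifferential R B,
      algebraMap R B ((Fintype.card A : R) ^ Fintype.card A * ∏ lam : A, f (lam, -lam)) • ω
        = 0 := by
  classical
  intro ω
  set D := KaehlerDifferential.D R B with hDdef
  set α := algebraMap R B with hα
  set P : R := ∏ lam : A, f (lam, -lam) with hP
  set a : A → R := fun lam => ∏ mu ∈ Finset.univ.erase lam, f (mu, -mu) with ha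
  have hone : ∀ lam : A, f (lam, 0) = 1 := fun lam => by rw [hfc]; exact hf0 lam
  have haP : ∀ lam, a lam * f (lam, -lam) = P := by
    intro lam
    rw [ha, hP]
    exact Finset.prod_erase_mul _ _ (Finset.mem_univ lam)
  have hmul' : ∀ lam lam' : A, v lam * v lam' = α (f (lam, lam')) • v (lam + lam') := by
    intro lam lam'
    rw [hmul, algebraMap_smul]
  -- the key coefficient identity
  have hK1 : ∀ κ ν : A, f (-κ, ν) * a κ = f (κ - ν, ν) * a (κ - ν) := by
    intro κ ν
    by_cases hν : ν = 0
    · subst hν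
      simp [hone, hf0, hfc (-κ) 0]
    · have hne : κ - ν ≠ κ := fun h => hν (sub_eq_self.mp h)
      have h1 : κ - ν ∈ Finset.univ.erase κ := Finset.mem_erase.mpr ⟨hne, Finset.mem_univ _⟩
      have h2 : κ ∈ Finset.univ.erase (κ - ν) :=
        Finset.mem_erase.mpr ⟨fun h => hne h.symm, Finset.mem_univ _⟩
      have hsets : (Finset.univ.erase κ).erase (κ - ν)
          = ((Finset.univ.erase (κ - ν)).erase κ : Finset A) := by
        ext x; simp; tauto
      have e1 : a κ = f (κ - ν, -(κ - ν)) * ∏ mu ∈ (Finset.univ.erase κ).erase (κ - ν), f (mu, -mu) :=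
        (Finset.mul_prod_erase _ _ h1).symm
      have e2 : a (κ - ν) = f (κ, -κ) * ∏ mu ∈ (Finset.univ.erase (κ - ν)).erase κ, f (mu, -mu) :=
        (Finset.mul_prod_erase _ _ h2).symm
      rw [e1, e2, hsets, ← mul_assoc, ← mul_assoc]
      congr 1
      -- f(-κ,ν) * f(κ-ν, -(κ-ν)) = f(κ-ν,ν) * f(κ,-κ)
      have h := hfa (κ - ν) ν (-κ)
      rw [sub_add_cancel, ← sub_eq_add_neg] at h
      rw [hfc (-κ) ν, neg_sub, hfc (κ - ν) (ν - κ)]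
      exact h.symm
  -- the small annihilator (n * P) kills D (v ν)
  have key : ∀ ν : A, α ((Fintype.card A : R) * P) • D (v ν) = 0 := by
    intro ν
    set G : A → KaehlerDifferential R B :=
      fun κ => α (f (-κ, ν) * a κ) • (v κ • D (v (-κ + ν))) with hG
    have hterm : ∀ lam : A, α P • D (v ν) = G lam - G (lam + ν) := by
      intro lam
      have h2 : α (f (lam, -lam)) • D (v ν) = (v lam * v (-lam)) • D (v ν) := by
        rw [hmul' lam (-lam), add_neg_cancel, hv0, smul_eq_mul, mul_one]
      have h3 : v (-lam) • D (v ν)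
          = α (f (-lam, ν)) • D (v (-lam + ν)) - v ν • D (v (-lam)) := by
        have hl := Derivation.leibniz D (v (-lam)) (v ν)
        rw [hmul (-lam) ν, Derivation.map_smul,
          ← algebraMap_smul B (f (-lam, ν)) (D (v (-lam + ν)))] at hl
        exact eq_sub_of_add_eq hl.symm
      have hc : f (-(lam + ν), ν) * a (lam + ν) = f (lam, ν) * a lam := by
        have h := hK1 (lam + ν) ν
        rwa [add_sub_cancel_right] at h
      have e5 : α (a lam) • (v lam • (α (f (-lam, ν)) • D (v (-lam + ν)))) = G lam := by
        simp only [hG]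
        rw [map_mul, mul_smul, smul_comm (v lam) (α (f (-lam, ν))),
          smul_comm (α (a lam)) (α (f (-lam, ν)))]
      have e6 : α (a lam) • (v lam • (v ν • D (v (-lam)))) = G (lam + ν) := by
        simp only [hG]
        rw [show -(lam + ν) + ν = -lam by abel, hc, map_mul, mul_smul,
          ← mul_smul (v lam) (v ν), hmul' lam ν, smul_assoc,
          smul_comm (α (a lam)) (α (f (lam, ν)))]
      calc α P • D (v ν)
          = α (a lam) • (α (f (lam, -lam)) • D (v ν)) := by
            rw [← mul_smul, ← map_mul, haP]
        _ = α (a lam) • ((v lam * v (-lam)) • D (v ν)) := by rw [h2]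
        _ = α (a lam) • (v lam • (v (-lam) • D (v ν))) := by rw [mul_smul]
        _ = α (a lam) • (v lam • (α (f (-lam, ν)) • D (v (-lam + ν)) - v ν • D (v (-lam)))) := by
            rw [h3]
        _ = α (a lam) • (v lam • (α (f (-lam, ν)) • D (v (-lam + ν))))
              - α (a lam) • (v lam • (v ν • D (v (-lam)))) := by
            rw [smul_sub, smul_sub]
        _ = G lam - G (lam + ν) := by rw [e5, e6]
    have hstep : α ((Fintype.card A : R) * P) • D (v ν)
        = ∑ lam : A, α P • D (v ν) := by
      rw [map_mul, map_natCast, mul_smul, Nat.cast_smul_eq_nsmul,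
        Finset.sum_const, Finset.card_univ]
    rw [hstep, Finset.sum_congr rfl fun lam _ => hterm lam, Finset.sum_sub_distrib,
      sub_eq_zero]
    exact (Fintype.sum_equiv (Equiv.addRight ν) _ _ fun lam => rfl).symm
  have keyb : ∀ b : B, α ((Fintype.card A : R) * P) • D b = 0 := by
    intro b
    rw [← Module.Basis.sum_repr v b, map_sum, Finset.smul_sum]
    refine Finset.sum_eq_zero fun ν _ => ?_
    rw [Derivation.map_smul, ← algebraMap_smul B (v.repr b ν) (D (v ν)), smul_comm,
      key, smul_zero]
  have keyω : ∀ ω : KaehlerDifferential R B, α ((Fintype.card A : R) * P) • ω = 0 := by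
    intro ω
    have hmem : ω ∈ Submodule.span B (Set.range (KaehlerDifferential.D R B)) := by
      rw [KaehlerDifferential.span_range_derivation]; trivial
    refine Submodule.span_induction ?_ ?_ ?_ ?_ hmem
    · rintro _ ⟨b, rfl⟩; exact keyb b
    · exact smul_zero _
    · intro x y _ _ hx hy; rw [smul_add, hx, hy, add_zero]
    · intro b x _ hx; rw [smul_comm, hx, smul_zero]
  have hpos : 0 < Fintype.card A := Fintype.card_pos
  have hfac : (Fintype.card A : R) ^ Fintype.card A * P
      = (Fintype.card A : R) ^ (Fintype.card A - 1) * ((Fintype.card A : R) * P) := by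
    rw [← mul_assoc, ← pow_succ, Nat.sub_add_cancel hpos]
  rw [hfac, map_mul, mul_smul, keyω, smul_zero]
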